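/- Let (u,τ,S) be a twice continuously differentiable solution of the full compressible Euler equations τ_t − u_x = 0, u_t + p_x = 0, S_t = 0 (p = K e^{S/c_v} τ^{−γ}) with τ > 0 on an open subset of ℝ×ℝ, and let 0 < ε < 1/4. Then the weighted gradient variables α_ε = η^{2ε/(γ−1)}·α and β_ε = η^{2ε/(γ−1)}·β satisfy, at every point: (α_ε)_t + c·(α_ε)_x = k_{1ε}·( k_{2ε}·(3α_ε − 4εα_ε + β_ε) + (1 − 4ε/(γ+1))·α_ε β_ε − α_ε² ) and (β_ε)_t − c·(β_ε)_x = k_{1ε}·( −k_{2ε}·(α_ε + 3β_ε − 4εβ_ε) + (1 − 4ε/(γ+1))·α_ε β_ε − β_ε² ), where k_{1ε} = ((γ+1)K_c/(2(γ−1)))·η^{(2/(γ−1))(1−ε)} and k_{2ε} = ((γ−1)/(γ(γ+1)))·η^{1+2ε/(γ−1)}·m_x. -/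

import Mathlib

open Real Set MeasureTheory

noncomputable section

/-- Partial derivative in the spatial variable `x`. -/
def pdx (f : ℝ → ℝ → ℝ) (x t : ℝ) : ℝ := deriv (fun y => f y t) x

/-- Partial derivative in the time variable `t`. -/
def pdt (f : ℝ → ℝ → ℝ) (x t : ℝ) : ℝ := deriv (fun s => f x s) t

/-- The time strip `ℝ × [0, T)`, where `T` is a real number or `+∞`. -/
def strip (T : EReal) : Set (ℝ × ℝ) := {p : ℝ × ℝ | 0 ≤ p.2 ∧ (p.2 : EReal) < T}

/-- `η = (2√(Kγ)/(γ−1)) τ^{−(γ−1)/2}`. -/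
def etaP (K γ : ℝ) (τ : ℝ → ℝ → ℝ) (x t : ℝ) : ℝ :=
  2 * Real.sqrt (K * γ) / (γ - 1) * τ x t ^ (-(γ - 1) / 2)

/-- Gradient variable `α = s_x = u_x + η_x` for the p-system. -/
def alphaP (K γ : ℝ) (u τ : ℝ → ℝ → ℝ) (x t : ℝ) : ℝ :=
  pdx u x t + pdx (etaP K γ τ) x t

/-- Gradient variable `β = r_x = u_x − η_x` for the p-system. -/
def betaP (K γ : ℝ) (u τ : ℝ → ℝ → ℝ) (x t : ℝ) : ℝ :=
  pdx u x t - pdx (etaP K γ τ) x t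

/-- The p-system `τ_t − u_x = 0`, `u_t + p_x = 0` with `p = K τ^{−γ}`, at the point `(x,t)`. -/
def pSystem (K γ : ℝ) (u τ : ℝ → ℝ → ℝ) (x t : ℝ) : Prop :=
  pdt τ x t - pdx u x t = 0 ∧
  pdt u x t + pdx (fun y s => K * τ y s ^ (-γ)) x t = 0

/-- Riemann invariant `s = u + η`. -/
def sRi (K γ : ℝ) (u τ : ℝ → ℝ → ℝ) (x t : ℝ) : ℝ := u x t + etaP K γ τ x t

/-- Riemann invariant `r = u − η`. -/
def rRi (K γ : ℝ) (u τ : ℝ → ℝ → ℝ) (x t : ℝ) : ℝ := u x t - etaP K γ τ x t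

/-- The Lagrangian wave speed `c = √(Kγ) τ^{−(γ+1)/2}`. -/
def cP (K γ : ℝ) (τ : ℝ → ℝ → ℝ) (x t : ℝ) : ℝ :=
  Real.sqrt (K * γ) * τ x t ^ (-(γ + 1) / 2)

/-- The constant `K_τ = (2√(Kγ)/(γ−1))^{2/(γ−1)}`. -/
def KtauC (K γ : ℝ) : ℝ := (2 * Real.sqrt (K * γ) / (γ - 1)) ^ (2 / (γ - 1))

/-- The constant `K_c = √(Kγ) K_τ^{−(γ+1)/2}`. -/
def KcC (K γ : ℝ) : ℝ := Real.sqrt (K * γ) * KtauC K γ ^ (-(γ + 1) / 2)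

/-- `k₁ = ((γ+1)K_c/(2(γ−1))) η^{2/(γ−1)}`. -/
def k1P (K γ : ℝ) (τ : ℝ → ℝ → ℝ) (x t : ℝ) : ℝ :=
  (γ + 1) * KcC K γ / (2 * (γ - 1)) * etaP K γ τ x t ^ (2 / (γ - 1))
/-- `m = e^{S/(2c_v)}`. -/
def mF (cv : ℝ) (S : ℝ → ℝ → ℝ) (x t : ℝ) : ℝ := Real.exp (S x t / (2 * cv))

/-- The ideal polytropic pressure `p = K e^{S/c_v} τ^{−γ}`. -/
def pF (K cv γ : ℝ) (τ S : ℝ → ℝ → ℝ) (x t : ℝ) : ℝ :=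
  K * Real.exp (S x t / cv) * τ x t ^ (-γ)

/-- The full compressible Euler equations `τ_t − u_x = 0`, `u_t + p_x = 0`, `S_t = 0`
with `p = K e^{S/c_v} τ^{−γ}`, at the point `(x,t)`. -/
def fullEuler (K cv γ : ℝ) (u τ S : ℝ → ℝ → ℝ) (x t : ℝ) : Prop :=
  pdt τ x t - pdx u x t = 0 ∧
  pdt u x t + pdx (pF K cv γ τ S) x t = 0 ∧
  pdt S x t = 0

/-- Wave speed `c = K_c m η^{(γ+1)/(γ−1)}` for the full Euler equations. -/
def cF (K cv γ : ℝ) (τ S : ℝ → ℝ → ℝ) (x t : ℝ) : ℝ :=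
  KcC K γ * mF cv S x t * etaP K γ τ x t ^ ((γ + 1) / (γ - 1))

/-- Gradient variable `α = u_x + m η_x + ((γ−1)/γ) m_x η` for the full Euler equations. -/
def alphaF (K cv γ : ℝ) (u τ S : ℝ → ℝ → ℝ) (x t : ℝ) : ℝ :=
  pdx u x t + mF cv S x t * pdx (etaP K γ τ) x t
    + (γ - 1) / γ * pdx (mF cv S) x t * etaP K γ τ x t

/-- Gradient variable `β = u_x − m η_x − ((γ−1)/γ) m_x η` for the full Euler equations. -/
def betaF (K cv γ : ℝ) (u τ S : ℝ → ℝ → ℝ) (x t : ℝ) : ℝ :=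
  pdx u x t - mF cv S x t * pdx (etaP K γ τ) x t
    - (γ - 1) / γ * pdx (mF cv S) x t * etaP K γ τ x t

/-- `k₂ = ((γ−1)/(γ(γ+1))) η m_x`. -/
def k2F (K cv γ : ℝ) (τ S : ℝ → ℝ → ℝ) (x t : ℝ) : ℝ :=
  (γ - 1) / (γ * (γ + 1)) * etaP K γ τ x t * pdx (mF cv S) x t

/-- Weighted gradient variable `α_ε = η^{2ε/(γ−1)} α`. -/
def aeps (K cv γ ε : ℝ) (u τ S : ℝ → ℝ → ℝ) (x t : ℝ) : ℝ :=
  etaP K γ τ x t ^ (2 * ε / (γ - 1)) * alphaF K cv γ u τ S x t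

/-- Weighted gradient variable `β_ε = η^{2ε/(γ−1)} β`. -/
def beps (K cv γ ε : ℝ) (u τ S : ℝ → ℝ → ℝ) (x t : ℝ) : ℝ :=
  etaP K γ τ x t ^ (2 * ε / (γ - 1)) * betaF K cv γ u τ S x t

/-- `k_{1ε} = ((γ+1)K_c/(2(γ−1))) η^{(2/(γ−1))(1−ε)}`. -/
def k1e (K γ ε : ℝ) (τ : ℝ → ℝ → ℝ) (x t : ℝ) : ℝ :=
  (γ + 1) * KcC K γ / (2 * (γ - 1)) * etaP K γ τ x t ^ (2 / (γ - 1) * (1 - ε))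

/-- `k_{2ε} = ((γ−1)/(γ(γ+1))) η^{1+2ε/(γ−1)} m_x`. -/
def k2e (K cv γ ε : ℝ) (τ S : ℝ → ℝ → ℝ) (x t : ℝ) : ℝ :=
  (γ - 1) / (γ * (γ + 1)) * etaP K γ τ x t ^ (1 + 2 * ε / (γ - 1)) * pdx (mF cv S) x t

/-! ### Auxiliary lemmas for the proof -/

private lemma hasDerivAt_fst_line' {F : ℝ × ℝ → ℝ} {x t : ℝ} (hF : DifferentiableAt ℝ F (x, t)) :
    HasDerivAt (fun y => F (y, t)) (fderiv ℝ F (x, t) (1, 0)) x := by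
  have h : HasDerivAt (fun y : ℝ => (y, t)) ((1 : ℝ), (0 : ℝ)) x :=
    (hasDerivAt_id x).prodMk (hasDerivAt_const x t)
  exact hF.hasFDerivAt.comp_hasDerivAt x h

private lemma hasDerivAt_snd_line' {F : ℝ × ℝ → ℝ} {x t : ℝ} (hF : DifferentiableAt ℝ F (x, t)) :
    HasDerivAt (fun s => F (x, s)) (fderiv ℝ F (x, t) (0, 1)) t := by
  have h : HasDerivAt (fun s : ℝ => (x, s)) ((0 : ℝ), (1 : ℝ)) t :=
    (hasDerivAt_const t x).prodMk (hasDerivAt_id t)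
  exact hF.hasFDerivAt.comp_hasDerivAt t h

private lemma hasDerivAt_pdx_of_diff' {f : ℝ → ℝ → ℝ} {x t : ℝ}
    (h : DifferentiableAt ℝ (fun p : ℝ × ℝ => f p.1 p.2) (x, t)) :
    HasDerivAt (fun y => f y t) (pdx f x t) x := by
  have h1 := hasDerivAt_fst_line' h
  have h2 : pdx f x t = fderiv ℝ (fun p : ℝ × ℝ => f p.1 p.2) (x, t) (1, 0) := h1.deriv
  rw [h2]; exact h1

private lemma hasDerivAt_pdt_of_diff' {f : ℝ → ℝ → ℝ} {x t : ℝ}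
    (h : DifferentiableAt ℝ (fun p : ℝ × ℝ => f p.1 p.2) (x, t)) :
    HasDerivAt (fun s => f x s) (pdt f x t) t := by
  have h1 := hasDerivAt_snd_line' h
  have h2 : pdt f x t = fderiv ℝ (fun p : ℝ × ℝ => f p.1 p.2) (x, t) (0, 1) := h1.deriv
  rw [h2]; exact h1

/-- Second-order facts from `C²` regularity: existence of the second partials of
`pdx f`, and Clairaut symmetry packaged as: the `t`-derivative of `pdx f` equals the
`x`-derivative of `pdt f` (both exist, with a common value). -/
private lemma c2_partial_facts' {f : ℝ → ℝ → ℝ} {Ω : Set (ℝ × ℝ)} (hΩ : IsOpen Ω)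
    (hf : ContDiffOn ℝ 2 (fun p : ℝ × ℝ => f p.1 p.2) Ω) {x t : ℝ} (hp : (x, t) ∈ Ω) :
    ∃ pxx pxt : ℝ,
      HasDerivAt (fun y => pdx f y t) pxx x ∧
      HasDerivAt (fun s => pdx f x s) pxt t ∧
      HasDerivAt (fun y => pdt f y t) pxt x := by
  set F : ℝ × ℝ → ℝ := fun p => f p.1 p.2 with hFdef
  have hdiff : ∀ z ∈ Ω, DifferentiableAt ℝ F z := fun z hz =>
    (hf.differentiableOn (by norm_num)).differentiableAt (hΩ.mem_nhds hz)
  have hF2 : ContDiffAt ℝ 2 F (x, t) := hf.contDiffAt (hΩ.mem_nhds hp)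
  have hF' : ContDiffAt ℝ 1 (fderiv ℝ F) (x, t) := hF2.fderiv_right (le_refl _)
  have hΦd : DifferentiableAt ℝ (fderiv ℝ F) (x, t) := hF'.differentiableAt (by norm_num)
  set g1 : ℝ × ℝ → ℝ := fun z => fderiv ℝ F z (1, 0) with hg1def
  set g2 : ℝ × ℝ → ℝ := fun z => fderiv ℝ F z (0, 1) with hg2def
  have hg1d : DifferentiableAt ℝ g1 (x, t) := hΦd.clm_apply (differentiableAt_const _)
  have hg2d : DifferentiableAt ℝ g2 (x, t) := hΦd.clm_apply (differentiableAt_const _)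
  have hmemx : ∀ᶠ y in nhds x, (y, t) ∈ Ω :=
    (hΩ.preimage (continuous_id.prodMk continuous_const)).mem_nhds hp
  have hmemt : ∀ᶠ s in nhds t, (x, s) ∈ Ω :=
    (hΩ.preimage (continuous_const.prodMk continuous_id)).mem_nhds hp
  have hev1 : ∀ z ∈ Ω, pdx f z.1 z.2 = g1 z := by
    intro z hz
    have := hasDerivAt_fst_line' (hdiff z hz)
    simpa [pdx, hg1def] using this.deriv
  have hev2 : ∀ z ∈ Ω, pdt f z.1 z.2 = g2 z := by
    intro z hz
    have := hasDerivAt_snd_line' (hdiff z hz)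
    simpa [pdt, hg2def] using this.deriv
  have h1x := hasDerivAt_fst_line' hg1d
  have h1t := hasDerivAt_snd_line' hg1d
  have h2x := hasDerivAt_fst_line' hg2d
  have hfd1 : fderiv ℝ g1 (x, t) = (fderiv ℝ (fderiv ℝ F) (x, t)).flip (1, 0) := by
    rw [hg1def, fderiv_clm_apply hΦd (differentiableAt_const _)]
    simp
  have hfd2 : fderiv ℝ g2 (x, t) = (fderiv ℝ (fderiv ℝ F) (x, t)).flip (0, 1) := by
    rw [hg2def, fderiv_clm_apply hΦd (differentiableAt_const _)]
    simp
  have hsym : fderiv ℝ (fderiv ℝ F) (x, t) (0, 1) (1, 0)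
      = fderiv ℝ (fderiv ℝ F) (x, t) (1, 0) (0, 1) :=
    hF2.isSymmSndFDerivAt (by norm_num) _ _
  refine ⟨fderiv ℝ g1 (x, t) (1, 0), fderiv ℝ g1 (x, t) (0, 1), ?_, ?_, ?_⟩
  · refine h1x.congr_of_eventuallyEq ?_
    filter_upwards [hmemx] with y hy using (hev1 (y, t) hy)
  · refine h1t.congr_of_eventuallyEq ?_
    filter_upwards [hmemt] with s hs using (hev1 (x, s) hs)
  · have hval : fderiv ℝ g2 (x, t) (1, 0) = fderiv ℝ g1 (x, t) (0, 1) := by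
      rw [hfd1, hfd2]
      simpa using hsym.symm
    rw [← hval]
    refine h2x.congr_of_eventuallyEq ?_
    filter_upwards [hmemx] with y hy using (hev2 (y, t) hy)

private lemma sqA_pos' {K γ : ℝ} (hK : 0 < K) (hγ : 1 < γ) :
    0 < 2 * Real.sqrt (K * γ) / (γ - 1) := by
  have h1 : 0 < Real.sqrt (K * γ) := Real.sqrt_pos.2 (by nlinarith)
  have h2 : 0 < 2 * Real.sqrt (K * γ) := by linarith
  exact div_pos h2 (by linarith)

private lemma KcC_pos' {K γ : ℝ} (hK : 0 < K) (hγ : 1 < γ) : 0 < KcC K γ := by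
  have h1 : 0 < Real.sqrt (K * γ) := Real.sqrt_pos.2 (by nlinarith)
  have h2 : 0 < KtauC K γ := Real.rpow_pos_of_pos (sqA_pos' hK hγ) _
  exact mul_pos h1 (Real.rpow_pos_of_pos h2 _)

/-- The key constant identity `K_c η^{(γ+1)/(γ-1)} = √(Kγ) τ^{-(γ+1)/2}`. -/
private lemma cid' {K γ : ℝ} (hK : 0 < K) (hγ : 1 < γ) {τ0 : ℝ} (hτ0 : 0 < τ0) :
    KcC K γ * (2 * Real.sqrt (K * γ) / (γ - 1) * τ0 ^ (-(γ - 1) / 2)) ^ ((γ + 1) / (γ - 1))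
      = Real.sqrt (K * γ) * τ0 ^ (-(γ + 1) / 2) := by
  have hA : 0 < 2 * Real.sqrt (K * γ) / (γ - 1) := sqA_pos' hK hγ
  have hγ1 : γ - 1 ≠ 0 := by linarith
  rw [Real.mul_rpow hA.le (Real.rpow_nonneg hτ0.le _)]
  rw [← Real.rpow_mul hτ0.le]
  have he1 : -(γ - 1) / 2 * ((γ + 1) / (γ - 1)) = -(γ + 1) / 2 := by field_simp
  rw [he1]
  have he2 : (2 * Real.sqrt (K * γ) / (γ - 1)) ^ ((γ + 1) / (γ - 1))
      = KtauC K γ ^ ((γ + 1) / 2) := by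
    rw [KtauC, ← Real.rpow_mul hA.le]
    congr 1
    field_simp
  rw [he2, KcC]
  have h3 : 0 < KtauC K γ := Real.rpow_pos_of_pos hA _
  rw [mul_assoc, ← mul_assoc (KtauC K γ ^ (-(γ + 1) / 2)), ← Real.rpow_add h3,
    show -(γ + 1) / 2 + (γ + 1) / 2 = 0 by ring, Real.rpow_zero, one_mul]

/-- Derivative of `η` along a line, from the derivative of `τ` along the line. -/
private lemma eta_line_deriv' {K γ : ℝ} (hK : 0 < K) (hγ : 1 < γ) {g : ℝ → ℝ} {g' x0 : ℝ}
    (hpos : 0 < g x0) (hg : HasDerivAt g g' x0) :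
    HasDerivAt (fun y => 2 * Real.sqrt (K * γ) / (γ - 1) * g y ^ (-(γ - 1) / 2))
      (-Real.sqrt (K * γ) * g x0 ^ (-(γ + 1) / 2) * g') x0 := by
  have h := (hg.rpow_const (p := -(γ - 1) / 2) (Or.inl hpos.ne')).const_mul
    (2 * Real.sqrt (K * γ) / (γ - 1))
  refine h.congr_deriv ?_
  rw [show -(γ - 1) / 2 - 1 = -(γ + 1) / 2 by ring]
  have hγ1 : γ - 1 ≠ 0 := by linarith
  field_simp

set_option maxHeartbeats 2000000 in
/-- Riccati equations for the weighted gradient variables `α_ε`, `β_ε`. -/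
theorem fullEuler_weighted_riccati_equations
    (K cv γ ε : ℝ) (hK : 0 < K) (hcv : 0 < cv) (hγ : 1 < γ)
    (hε0 : 0 < ε) (hε : ε < 1 / 4)
    (Ω : Set (ℝ × ℝ)) (hΩ : IsOpen Ω)
    (u τ S : ℝ → ℝ → ℝ)
    (hu_reg : ContDiffOn ℝ 2 (fun p : ℝ × ℝ => u p.1 p.2) Ω)
    (hτ_reg : ContDiffOn ℝ 2 (fun p : ℝ × ℝ => τ p.1 p.2) Ω)
    (hS_reg : ContDiffOn ℝ 2 (fun p : ℝ × ℝ => S p.1 p.2) Ω)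
    (hτ_pos : ∀ p ∈ Ω, 0 < τ p.1 p.2)
    (hpde : ∀ p ∈ Ω, fullEuler K cv γ u τ S p.1 p.2) :
    ∀ p ∈ Ω,
      pdt (aeps K cv γ ε u τ S) p.1 p.2 +
          cF K cv γ τ S p.1 p.2 * pdx (aeps K cv γ ε u τ S) p.1 p.2 =
        k1e K γ ε τ p.1 p.2 *
          (k2e K cv γ ε τ S p.1 p.2 *
              (3 * aeps K cv γ ε u τ S p.1 p.2 - 4 * ε * aeps K cv γ ε u τ S p.1 p.2 +
                beps K cv γ ε u τ S p.1 p.2) +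
            (1 - 4 * ε / (γ + 1)) * aeps K cv γ ε u τ S p.1 p.2 * beps K cv γ ε u τ S p.1 p.2 -
            (aeps K cv γ ε u τ S p.1 p.2) ^ 2) ∧
      pdt (beps K cv γ ε u τ S) p.1 p.2 -
          cF K cv γ τ S p.1 p.2 * pdx (beps K cv γ ε u τ S) p.1 p.2 =
        k1e K γ ε τ p.1 p.2 *
          (-(k2e K cv γ ε τ S p.1 p.2) *
              (aeps K cv γ ε u τ S p.1 p.2 + 3 * beps K cv γ ε u τ S p.1 p.2 -
                4 * ε * beps K cv γ ε u τ S p.1 p.2) +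
            (1 - 4 * ε / (γ + 1)) * aeps K cv γ ε u τ S p.1 p.2 * beps K cv γ ε u τ S p.1 p.2 -
            (beps K cv γ ε u τ S p.1 p.2) ^ 2) := by
  have hγ1 : γ - 1 ≠ 0 := by linarith
  have hγ0 : (γ : ℝ) ≠ 0 := by linarith
  have hγp1 : γ + 1 ≠ 0 := by linarith
  have hKγ : 0 < K * γ := by nlinarith
  have hdu : ∀ z ∈ Ω, DifferentiableAt ℝ (fun p : ℝ × ℝ => u p.1 p.2) z := fun z hz =>
    (hu_reg.differentiableOn (by norm_num)).differentiableAt (hΩ.mem_nhds hz)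
  have hdτ : ∀ z ∈ Ω, DifferentiableAt ℝ (fun p : ℝ × ℝ => τ p.1 p.2) z := fun z hz =>
    (hτ_reg.differentiableOn (by norm_num)).differentiableAt (hΩ.mem_nhds hz)
  have hdS : ∀ z ∈ Ω, DifferentiableAt ℝ (fun p : ℝ × ℝ => S p.1 p.2) z := fun z hz =>
    (hS_reg.differentiableOn (by norm_num)).differentiableAt (hΩ.mem_nhds hz)
  have hη_reg : ContDiffOn ℝ 2 (fun p : ℝ × ℝ => etaP K γ τ p.1 p.2) Ω := by
    intro z hz
    have h1 : ContDiffAt ℝ 2 (fun p : ℝ × ℝ => τ p.1 p.2 ^ (-(γ - 1) / 2)) z :=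
      (hτ_reg.contDiffAt (hΩ.mem_nhds hz)).rpow_const_of_ne (hτ_pos z hz).ne'
    exact ((contDiffAt_const (c := 2 * Real.sqrt (K * γ) / (γ - 1))).mul h1).contDiffWithinAt
  have hm_reg : ContDiffOn ℝ 2 (fun p : ℝ × ℝ => mF cv S p.1 p.2) Ω :=
    (hS_reg.div_const (2 * cv)).exp
  have hEta_x : ∀ z ∈ Ω, HasDerivAt (fun y => etaP K γ τ y z.2)
      (-Real.sqrt (K * γ) * τ z.1 z.2 ^ (-(γ + 1) / 2) * pdx τ z.1 z.2) z.1 := by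
    rintro ⟨zx, zt⟩ hz
    exact eta_line_deriv' hK hγ (hτ_pos _ hz) (hasDerivAt_pdx_of_diff' (hdτ _ hz))
  have hEta_t : ∀ z ∈ Ω, HasDerivAt (fun s => etaP K γ τ z.1 s)
      (-Real.sqrt (K * γ) * τ z.1 z.2 ^ (-(γ + 1) / 2) * pdt τ z.1 z.2) z.2 := by
    rintro ⟨zx, zt⟩ hz
    exact eta_line_deriv' hK hγ (hτ_pos _ hz) (hasDerivAt_pdt_of_diff' (hdτ _ hz))
  have hM_x : ∀ z ∈ Ω, HasDerivAt (fun y => mF cv S y z.2)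
      (Real.exp (S z.1 z.2 / (2 * cv)) * (pdx S z.1 z.2 / (2 * cv))) z.1 := by
    rintro ⟨zx, zt⟩ hz
    exact ((hasDerivAt_pdx_of_diff' (hdS _ hz)).div_const (2 * cv)).exp
  have hM_t : ∀ z ∈ Ω, HasDerivAt (fun s => mF cv S z.1 s)
      (Real.exp (S z.1 z.2 / (2 * cv)) * (pdt S z.1 z.2 / (2 * cv))) z.2 := by
    rintro ⟨zx, zt⟩ hz
    exact ((hasDerivAt_pdt_of_diff' (hdS _ hz)).div_const (2 * cv)).exp
  have hF1 : ∀ z ∈ Ω, pdt (etaP K γ τ) z.1 z.2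
      = -(KcC K γ * etaP K γ τ z.1 z.2 ^ ((γ + 1) / (γ - 1))) * pdx u z.1 z.2 := by
    rintro ⟨zx, zt⟩ hz
    have h : pdt (etaP K γ τ) zx zt
        = -Real.sqrt (K * γ) * τ zx zt ^ (-(γ + 1) / 2) * pdt τ zx zt :=
      (hEta_t (zx, zt) hz).deriv
    have hτt : pdt τ zx zt = pdx u zx zt := by
      have := (hpde (zx, zt) hz).1; linarith
    have hc : KcC K γ * etaP K γ τ zx zt ^ ((γ + 1) / (γ - 1))
        = Real.sqrt (K * γ) * τ zx zt ^ (-(γ + 1) / 2) := by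
      simp only [etaP]
      exact cid' hK hγ (hτ_pos _ hz)
    rw [h, hτt, hc]
    ring
  have hF2 : ∀ z ∈ Ω, pdt (mF cv S) z.1 z.2 = 0 := by
    rintro ⟨zx, zt⟩ hz
    have h : pdt (mF cv S) zx zt
        = Real.exp (S zx zt / (2 * cv)) * (pdt S zx zt / (2 * cv)) := (hM_t (zx, zt) hz).deriv
    rw [h, (hpde (zx, zt) hz).2.2]
    simp
  have hF4 : ∀ z ∈ Ω, pdx (pF K cv γ τ S) z.1 z.2
      = KcC K γ * mF cv S z.1 z.2 * etaP K γ τ z.1 z.2 ^ ((γ + 1) / (γ - 1))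
        * (mF cv S z.1 z.2 * pdx (etaP K γ τ) z.1 z.2
          + (γ - 1) / γ * pdx (mF cv S) z.1 z.2 * etaP K γ τ z.1 z.2) := by
    rintro ⟨zx, zt⟩ hz
    have hτ0 := hτ_pos _ hz
    have hτx := hasDerivAt_pdx_of_diff' (hdτ _ hz)
    have hSx := hasDerivAt_pdx_of_diff' (hdS _ hz)
    have hP : pdx (pF K cv γ τ S) zx zt
        = K * (Real.exp (S zx zt / cv) * (pdx S zx zt / cv)) * τ zx zt ^ (-γ)
          + K * Real.exp (S zx zt / cv) * (pdx τ zx zt * (-γ) * τ zx zt ^ (-γ - 1)) :=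
      (((hSx.div_const cv).exp.const_mul K).mul (hτx.rpow_const (Or.inl hτ0.ne'))).deriv
    have hEx : pdx (etaP K γ τ) zx zt
        = -Real.sqrt (K * γ) * τ zx zt ^ (-(γ + 1) / 2) * pdx τ zx zt :=
      (hEta_x (zx, zt) hz).deriv
    have hMx : pdx (mF cv S) zx zt
        = Real.exp (S zx zt / (2 * cv)) * (pdx S zx zt / (2 * cv)) := (hM_x (zx, zt) hz).deriv
    rw [hP, hEx, hMx]
    simp only [mF, etaP]
    have hEE : Real.exp (S zx zt / (2 * cv)) * Real.exp (S zx zt / (2 * cv))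
        = Real.exp (S zx zt / cv) := by
      rw [← Real.exp_add]; congr 1; field_simp; ring
    have hXX : τ zx zt ^ (-(γ + 1) / 2) * τ zx zt ^ (-(γ + 1) / 2) = τ zx zt ^ (-γ - 1) := by
      rw [← Real.rpow_add hτ0]; congr 1; ring
    have hXY : τ zx zt ^ (-(γ + 1) / 2) * τ zx zt ^ (-(γ - 1) / 2) = τ zx zt ^ (-γ) := by
      rw [← Real.rpow_add hτ0]; congr 1; ring
    have hc' : KcC K γ * (2 * Real.sqrt (K * γ) / (γ - 1) * τ zx zt ^ (-(γ - 1) / 2))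
          ^ ((γ + 1) / (γ - 1)) = Real.sqrt (K * γ) * τ zx zt ^ (-(γ + 1) / 2) :=
      cid' hK hγ hτ0
    have hKcW : KcC K γ * Real.exp (S zx zt / (2 * cv))
          * (2 * Real.sqrt (K * γ) / (γ - 1) * τ zx zt ^ (-(γ - 1) / 2)) ^ ((γ + 1) / (γ - 1))
        = Real.exp (S zx zt / (2 * cv))
          * (Real.sqrt (K * γ) * τ zx zt ^ (-(γ + 1) / 2)) := by
      rw [mul_comm (KcC K γ), mul_assoc, hc']
    rw [hKcW, ← hEE, ← hXX, ← hXY]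
    set sq := Real.sqrt (K * γ) with hsqdef
    have hsq2 : sq * sq = K * γ := Real.mul_self_sqrt hKγ.le
    have hKval : K = sq * sq / γ := by
      rw [eq_div_iff hγ0]; linarith [hsq2]
    rw [hKval]
    field_simp
    ring
  -- main part
  rintro ⟨x, t⟩ hp
  have hτ0 : 0 < τ x t := hτ_pos (x, t) hp
  have he : 0 < etaP K γ τ x t :=
    mul_pos (sqA_pos' hK hγ) (Real.rpow_pos_of_pos hτ0 _)
  have hmemx : ∀ᶠ y in nhds x, (y, t) ∈ Ω :=
    (hΩ.preimage (continuous_id.prodMk continuous_const)).mem_nhds hp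
  obtain ⟨vx, vt, hVx, hVt, hUtx⟩ := c2_partial_facts' hΩ hu_reg hp
  obtain ⟨exx, ext, hExx, hExt, hEtx⟩ := c2_partial_facts' hΩ hη_reg hp
  obtain ⟨mxx, mxt, hMxx, hMxt, hMtx⟩ := c2_partial_facts' hΩ hm_reg hp
  have hEline : HasDerivAt (fun y => etaP K γ τ y t) (pdx (etaP K γ τ) x t) x := by
    have h := hEta_x (x, t) hp
    rw [show pdx (etaP K γ τ) x t = _ from h.deriv]
    exact h
  have hMxline : HasDerivAt (fun y => mF cv S y t) (pdx (mF cv S) x t) x := by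
    have h := hM_x (x, t) hp
    rw [show pdx (mF cv S) x t = _ from h.deriv]
    exact h
  have hEt : HasDerivAt (fun s => etaP K γ τ x s)
      (-(KcC K γ * etaP K γ τ x t ^ ((γ + 1) / (γ - 1))) * pdx u x t) t := by
    have h := hEta_t (x, t) hp
    have h2 : -(KcC K γ * etaP K γ τ x t ^ ((γ + 1) / (γ - 1))) * pdx u x t
        = -Real.sqrt (K * γ) * τ x t ^ (-(γ + 1) / 2) * pdt τ x t :=
      (hF1 (x, t) hp).symm.trans h.deriv
    rw [h2]; exact h
  have hMt0 : HasDerivAt (fun s => mF cv S x s) 0 t := by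
    have h := hM_t (x, t) hp
    rw [(hpde (x, t) hp).2.2] at h
    simpa using h
  have hmxt0 : mxt = 0 := by
    refine hMtx.unique ?_
    refine (hasDerivAt_const x (0 : ℝ)).congr_of_eventuallyEq ?_
    filter_upwards [hmemx] with y hy
    exact hF2 (y, t) hy
  have hRext := (((hEline.rpow_const (p := (γ + 1) / (γ - 1)) (Or.inl he.ne')).const_mul
      (KcC K γ)).neg).mul hVx
  have hext_eq := hEtx.unique (hRext.congr_of_eventuallyEq (by
    filter_upwards [hmemx] with y hy
    exact hF1 (y, t) hy))
  have hInner := (hMxline.mul hExx).add ((hMxx.const_mul ((γ - 1) / γ)).mul hEline)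
  have hRvt := (((hMxline.const_mul (KcC K γ)).mul
      (hEline.rpow_const (p := (γ + 1) / (γ - 1)) (Or.inl he.ne'))).mul hInner).neg
  have hvt_eq := hUtx.unique (hRvt.congr_of_eventuallyEq (by
    filter_upwards [hmemx] with y hy
    have h1 := (hpde (y, t) hy).2.1
    have h2 := hF4 (y, t) hy
    rw [h2] at h1
    simp only [Pi.mul_apply, Pi.add_apply, Pi.neg_apply]
    linarith))
  have hDt_a := (hEt.rpow_const (p := 2 * ε / (γ - 1)) (Or.inl he.ne')).mul
    ((hVt.add (hMt0.mul hExt)).add ((hMxt.const_mul ((γ - 1) / γ)).mul hEt))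
  have hDx_a := (hEline.rpow_const (p := 2 * ε / (γ - 1)) (Or.inl he.ne')).mul
    ((hVx.add (hMxline.mul hExx)).add ((hMxx.const_mul ((γ - 1) / γ)).mul hEline))
  have hDt_b := (hEt.rpow_const (p := 2 * ε / (γ - 1)) (Or.inl he.ne')).mul
    ((hVt.sub (hMt0.mul hExt)).sub ((hMxt.const_mul ((γ - 1) / γ)).mul hEt))
  have hDx_b := (hEline.rpow_const (p := 2 * ε / (γ - 1)) (Or.inl he.ne')).mul
    ((hVx.sub (hMxline.mul hExx)).sub ((hMxx.const_mul ((γ - 1) / γ)).mul hEline))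
  have h_pdt_a : pdt (aeps K cv γ ε u τ S) x t = _ := hDt_a.deriv
  have h_pdx_a : pdx (aeps K cv γ ε u τ S) x t = _ := hDx_a.deriv
  have h_pdt_b : pdt (beps K cv γ ε u τ S) x t = _ := hDt_b.deriv
  have h_pdx_b : pdx (beps K cv γ ε u τ S) x t = _ := hDx_b.deriv
  have r1 : etaP K γ τ x t ^ (2 * ε / (γ - 1) - 1)
      = etaP K γ τ x t ^ (2 * ε / (γ - 1)) / etaP K γ τ x t := by
    rw [Real.rpow_sub he, Real.rpow_one]
  have r3 : etaP K γ τ x t ^ ((γ + 1) / (γ - 1) - 1) = etaP K γ τ x t ^ (2 / (γ - 1)) := by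
    congr 1
    field_simp
    ring
  have r2 : etaP K γ τ x t ^ ((γ + 1) / (γ - 1))
      = etaP K γ τ x t ^ (2 / (γ - 1)) * etaP K γ τ x t := by
    rw [show (γ + 1) / (γ - 1) = 2 / (γ - 1) + 1 by field_simp; ring, Real.rpow_add he,
      Real.rpow_one]
  have r4 : etaP K γ τ x t ^ (2 / (γ - 1) * (1 - ε))
      = etaP K γ τ x t ^ (2 / (γ - 1)) / etaP K γ τ x t ^ (2 * ε / (γ - 1)) := by
    rw [show 2 / (γ - 1) * (1 - ε) = 2 / (γ - 1) - 2 * ε / (γ - 1) by ring, Real.rpow_sub he]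
  have r5 : etaP K γ τ x t ^ (1 + 2 * ε / (γ - 1))
      = etaP K γ τ x t * etaP K γ τ x t ^ (2 * ε / (γ - 1)) := by
    rw [Real.rpow_add he, Real.rpow_one]
  have hP0 : etaP K γ τ x t ^ (2 * ε / (γ - 1)) ≠ 0 := (Real.rpow_pos_of_pos he _).ne'
  have hQ0 : etaP K γ τ x t ^ (2 / (γ - 1)) ≠ 0 := (Real.rpow_pos_of_pos he _).ne'
  constructor
  · rw [h_pdt_a, h_pdx_a, hext_eq, hvt_eq, hmxt0]
    simp only [aeps, beps, alphaF, betaF, k1e, k2e, cF]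
    simp only [Pi.mul_apply, Pi.add_apply, Pi.sub_apply, Pi.neg_apply]
    rw [r3, r2, r1, r4, r5]
    generalize etaP K γ τ x t ^ (2 * ε / (γ - 1)) = P at hP0 ⊢
    generalize etaP K γ τ x t ^ (2 / (γ - 1)) = Q at hQ0 ⊢
    field_simp
    ring
  · rw [h_pdt_b, h_pdx_b, hext_eq, hvt_eq, hmxt0]
    simp only [aeps, beps, alphaF, betaF, k1e, k2e, cF]
    simp only [Pi.mul_apply, Pi.add_apply, Pi.sub_apply, Pi.neg_apply]
    rw [r3, r2, r1, r4, r5]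
    generalize etaP K γ τ x t ^ (2 * ε / (γ - 1)) = P at hP0 ⊢
    generalize etaP K γ τ x t ^ (2 / (γ - 1)) = Q at hQ0 ⊢
    field_simp
    ring
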